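/- Let φ : [0,∞) → [0,∞) be a bounded measurable integrable function with φ ∈ L²(0,∞), let λ > 0 satisfy λ ∫₀^∞ φ(t) dt < 1, and let (a_T)_{T∈ℕ} be a sequence in (0,1). Define ψ_T(t) = Σ_{k=1}^∞ (a_T λ)^k φ^{*k}(t). Then each ψ_T belongs to L²(0,∞) with sup_{T} ‖ψ_T‖_{L²(0,∞)} < ∞, and lim_{T→∞} ∫₀^∞ ψ_T(T s)² ds = 0. -/

import Mathlib

open MeasureTheory Filter

/-- Iterated convolution: `iterConv φ k = φ^{*(k+1)}`, where `φ^{*1} = φ` and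
`φ^{*(k+1)}(t) = ∫₀ᵗ φ^{*k}(t−s) φ(s) ds`. -/
noncomputable def iterConv (φ : ℝ → ℝ) : ℕ → ℝ → ℝ
  | 0 => φ
  | (k + 1) => fun t => ∫ s in (0 : ℝ)..t, iterConv φ k (t - s) * φ s

lemma measurable_setInt {f : ℝ → ℝ} (hf : Measurable f) {φ : ℝ → ℝ} (hφ : Measurable φ)
    {S : Set (ℝ × ℝ)} (hS : MeasurableSet S) :
    Measurable fun t => ∫ s, S.indicator (fun p : ℝ × ℝ => f (p.1 - p.2) * φ p.2) (t, s) := by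
  have hm : StronglyMeasurable (Function.uncurry fun t s =>
      S.indicator (fun p : ℝ × ℝ => f (p.1 - p.2) * φ p.2) (t, s)) := by
    have : Measurable (S.indicator (fun p : ℝ × ℝ => f (p.1 - p.2) * φ p.2)) :=
      Measurable.indicator ((hf.comp (measurable_fst.sub measurable_snd)).mul
        (hφ.comp measurable_snd)) hS
    exact this.stronglyMeasurable
  exact hm.integral_prod_right.measurable

lemma iterConv_measurable {φ : ℝ → ℝ} (hφ : Measurable φ) (k : ℕ) :
    Measurable (iterConv φ k) := by
  induction k with
  | zero => exact hφ
  | succ k ih =>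
    have h1 : MeasurableSet {p : ℝ × ℝ | 0 < p.2 ∧ p.2 ≤ p.1} :=
      (measurableSet_lt measurable_const measurable_snd).inter
        (measurableSet_le measurable_snd measurable_fst)
    have h2 : MeasurableSet {p : ℝ × ℝ | p.1 < p.2 ∧ p.2 ≤ 0} :=
      (measurableSet_lt measurable_fst measurable_snd).inter
        (measurableSet_le measurable_snd measurable_const)
    have key : iterConv φ (k+1) = fun t =>
        (∫ s, Set.indicator {p : ℝ × ℝ | 0 < p.2 ∧ p.2 ≤ p.1}
            (fun p : ℝ × ℝ => iterConv φ k (p.1 - p.2) * φ p.2) (t, s)) -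
        (∫ s, Set.indicator {p : ℝ × ℝ | p.1 < p.2 ∧ p.2 ≤ 0}
            (fun p : ℝ × ℝ => iterConv φ k (p.1 - p.2) * φ p.2) (t, s)) := by
      funext t
      show (∫ s in (0:ℝ)..t, iterConv φ k (t - s) * φ s) = _
      rw [intervalIntegral.intervalIntegral_eq_integral_uIoc]
      rcases le_or_gt 0 t with h | h
      · rw [if_pos h, one_smul, Set.uIoc_of_le h]
        have hA : (fun s => Set.indicator {p : ℝ × ℝ | 0 < p.2 ∧ p.2 ≤ p.1}
            (fun p : ℝ × ℝ => iterConv φ k (p.1 - p.2) * φ p.2) (t, s))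
            = (Set.Ioc 0 t).indicator (fun s => iterConv φ k (t - s) * φ s) := by
          funext s
          by_cases hs : s ∈ Set.Ioc 0 t
          · rw [Set.indicator_of_mem hs, Set.indicator_of_mem]
            exact ⟨hs.1, hs.2⟩
          · rw [Set.indicator_of_notMem hs, Set.indicator_of_notMem]
            exact fun hc => hs ⟨hc.1, hc.2⟩
        have hB : (fun s => Set.indicator {p : ℝ × ℝ | p.1 < p.2 ∧ p.2 ≤ 0}
            (fun p : ℝ × ℝ => iterConv φ k (p.1 - p.2) * φ p.2) (t, s))
            = fun _ => (0:ℝ) := by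
          funext s
          refine Set.indicator_of_notMem (fun hc => ?_) _
          exact absurd (hc.1.trans_le (hc.2.trans h)) (lt_irrefl t)
        rw [hA, hB, integral_indicator measurableSet_Ioc, integral_zero, sub_zero]
      · rw [if_neg (not_le.mpr h), Set.uIoc_of_ge h.le, neg_one_smul]
        have hA : (fun s => Set.indicator {p : ℝ × ℝ | 0 < p.2 ∧ p.2 ≤ p.1}
            (fun p : ℝ × ℝ => iterConv φ k (p.1 - p.2) * φ p.2) (t, s))
            = fun _ => (0:ℝ) := by
          funext s
          refine Set.indicator_of_notMem (fun hc => ?_) _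
          exact absurd ((hc.1.trans_le hc.2).trans h) (lt_irrefl (0:ℝ))
        have hB : (fun s => Set.indicator {p : ℝ × ℝ | p.1 < p.2 ∧ p.2 ≤ 0}
            (fun p : ℝ × ℝ => iterConv φ k (p.1 - p.2) * φ p.2) (t, s))
            = (Set.Ioc t 0).indicator (fun s => iterConv φ k (t - s) * φ s) := by
          funext s
          by_cases hs : s ∈ Set.Ioc t 0
          · rw [Set.indicator_of_mem hs, Set.indicator_of_mem]
            exact ⟨hs.1, hs.2⟩
          · rw [Set.indicator_of_notMem hs, Set.indicator_of_notMem]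
            exact fun hc => hs ⟨hc.1, hc.2⟩
        rw [hA, hB, integral_indicator measurableSet_Ioc, integral_zero, zero_sub]
    rw [key]
    exact (measurable_setInt ih hφ h1).sub (measurable_setInt ih hφ h2)


section
variable {φ : ℝ → ℝ} {C : ℝ}

lemma iterConv_bounds (hφ_meas : Measurable φ)
    (hφ_nonneg : ∀ t, 0 ≤ t → 0 ≤ φ t) (hφ_bdd : ∀ t, 0 ≤ t → φ t ≤ C)
    (hφ_int : IntegrableOn φ (Set.Ioi 0)) :
    ∀ k, ∀ t, 0 ≤ t → 0 ≤ iterConv φ k t ∧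
      iterConv φ k t ≤ C * (∫ x in Set.Ioi (0:ℝ), φ x) ^ k := by
  set B := ∫ x in Set.Ioi (0:ℝ), φ x with hBdef
  have hC : 0 ≤ C := (hφ_nonneg 0 le_rfl).trans (hφ_bdd 0 le_rfl)
  have hB : 0 ≤ B :=
    setIntegral_nonneg measurableSet_Ioi (fun x hx => hφ_nonneg x hx.le)
  intro k
  induction k with
  | zero => exact fun t ht => ⟨hφ_nonneg t ht, by rw [pow_zero, mul_one]; exact hφ_bdd t ht⟩
  | succ k ih =>
    intro t ht
    have hφ_ii : IntervalIntegrable φ volume 0 t := by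
      rw [intervalIntegrable_iff, Set.uIoc_of_le ht]
      exact hφ_int.mono_set Set.Ioc_subset_Ioi_self
    have hmeas : Measurable fun s => iterConv φ k (t - s) * φ s :=
      ((iterConv_measurable hφ_meas k).comp (measurable_const.sub measurable_id)).mul hφ_meas
    have hIntOn : IntegrableOn (fun s => iterConv φ k (t - s) * φ s) (Set.Ioc 0 t) := by
      apply Measure.integrableOn_of_bounded (M := C * B ^ k * C) measure_Ioc_lt_top.ne
        hmeas.aestronglyMeasurable
      refine (ae_restrict_iff' measurableSet_Ioc).2 (ae_of_all _ fun s hs => ?_)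
      have hts : (0:ℝ) ≤ t - s := by linarith [hs.2]
      have h1 := ih (t - s) hts
      have h2 : 0 ≤ φ s := hφ_nonneg s hs.1.le
      rw [Real.norm_eq_abs, abs_of_nonneg (mul_nonneg h1.1 h2)]
      exact mul_le_mul h1.2 (hφ_bdd s hs.1.le) h2 (mul_nonneg hC (pow_nonneg hB k))
    have hInt : IntervalIntegrable (fun s => iterConv φ k (t - s) * φ s) volume 0 t := by
      rw [intervalIntegrable_iff, Set.uIoc_of_le ht]; exact hIntOn
    constructor
    · apply intervalIntegral.integral_nonneg ht
      intro s hs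
      exact mul_nonneg (ih (t - s) (by linarith [hs.2])).1 (hφ_nonneg s hs.1)
    · calc iterConv φ (k+1) t ≤ ∫ s in (0:ℝ)..t, (C * B ^ k) * φ s := by
            apply intervalIntegral.integral_mono_on ht hInt (hφ_ii.const_mul _)
            intro s hs
            exact mul_le_mul_of_nonneg_right (ih (t - s) (by linarith [hs.2])).2
              (hφ_nonneg s hs.1)
        _ = (C * B ^ k) * ∫ s in (0:ℝ)..t, φ s := by
            rw [intervalIntegral.integral_const_mul]
        _ ≤ (C * B ^ k) * B := by
            apply mul_le_mul_of_nonneg_left _ (mul_nonneg hC (pow_nonneg hB k))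
            rw [intervalIntegral.integral_of_le ht]
            exact setIntegral_mono_set hφ_int
              ((ae_restrict_iff' measurableSet_Ioi).2 (ae_of_all _ fun x hx => hφ_nonneg x hx.le))
              (Set.Ioc_subset_Ioi_self.eventuallyLE)
        _ = C * B ^ (k+1) := by ring

lemma iterConv_integrandOn (hφ_meas : Measurable φ)
    (hφ_nonneg : ∀ t, 0 ≤ t → 0 ≤ φ t) (hφ_bdd : ∀ t, 0 ≤ t → φ t ≤ C)
    (hφ_int : IntegrableOn φ (Set.Ioi 0)) (k : ℕ) {t : ℝ} (ht : 0 ≤ t) :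
    IntegrableOn (fun s => iterConv φ k (t - s) * φ s) (Set.Ioc 0 t) := by
  have hC : 0 ≤ C := (hφ_nonneg 0 le_rfl).trans (hφ_bdd 0 le_rfl)
  have hB : 0 ≤ (∫ x in Set.Ioi (0:ℝ), φ x) :=
    setIntegral_nonneg measurableSet_Ioi (fun x hx => hφ_nonneg x hx.le)
  have hmeas : Measurable fun s => iterConv φ k (t - s) * φ s :=
    ((iterConv_measurable hφ_meas k).comp (measurable_const.sub measurable_id)).mul hφ_meas
  apply Measure.integrableOn_of_bounded
    (M := C * (∫ x in Set.Ioi (0:ℝ), φ x) ^ k * C) measure_Ioc_lt_top.ne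
    hmeas.aestronglyMeasurable
  refine (ae_restrict_iff' measurableSet_Ioc).2 (ae_of_all _ fun s hs => ?_)
  have hts : (0:ℝ) ≤ t - s := by linarith [hs.2]
  have h1 := iterConv_bounds hφ_meas hφ_nonneg hφ_bdd hφ_int k (t - s) hts
  have h2 : 0 ≤ φ s := hφ_nonneg s hs.1.le
  rw [Real.norm_eq_abs, abs_of_nonneg (mul_nonneg h1.1 h2)]
  exact mul_le_mul h1.2 (hφ_bdd s hs.1.le) h2 (mul_nonneg hC (pow_nonneg hB k))

lemma iterConv_lintegral_le (hφ_meas : Measurable φ)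
    (hφ_nonneg : ∀ t, 0 ≤ t → 0 ≤ φ t) (hφ_bdd : ∀ t, 0 ≤ t → φ t ≤ C)
    (hφ_int : IntegrableOn φ (Set.Ioi 0)) :
    ∀ k, (∫⁻ t in Set.Ioi (0:ℝ), ENNReal.ofReal (iterConv φ k t)) ≤
      (ENNReal.ofReal (∫ x in Set.Ioi (0:ℝ), φ x)) ^ (k + 1) := by
  set B := ∫ x in Set.Ioi (0:ℝ), φ x with hBdef
  have hφnn : 0 ≤ᵐ[volume.restrict (Set.Ioi (0:ℝ))] φ :=
    (ae_restrict_iff' measurableSet_Ioi).2 (ae_of_all _ fun x hx => hφ_nonneg x hx.le)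
  have hL0 : (∫⁻ t in Set.Ioi (0:ℝ), ENNReal.ofReal (φ t)) = ENNReal.ofReal B :=
    (ofReal_integral_eq_lintegral_ofReal hφ_int hφnn).symm
  intro k
  induction k with
  | zero => rw [pow_one]; exact le_of_eq hL0
  | succ k ih =>
    set H : ℝ × ℝ → ENNReal := Set.indicator {p : ℝ × ℝ | 0 < p.2 ∧ p.2 ≤ p.1}
      (fun p => ENNReal.ofReal (iterConv φ k (p.1 - p.2) * φ p.2)) with hHdef
    have hS : MeasurableSet {p : ℝ × ℝ | 0 < p.2 ∧ p.2 ≤ p.1} :=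
      (measurableSet_lt measurable_const measurable_snd).inter
        (measurableSet_le measurable_snd measurable_fst)
    have hHmeas : Measurable H := by
      apply Measurable.indicator _ hS
      exact ENNReal.measurable_ofReal.comp
        (((iterConv_measurable hφ_meas k).comp (measurable_fst.sub measurable_snd)).mul
          (hφ_meas.comp measurable_snd))
    -- pointwise identity on Ioi 0
    have hpt : ∀ t ∈ Set.Ioi (0:ℝ),
        ENNReal.ofReal (iterConv φ (k+1) t) = ∫⁻ s, H (t, s) := by
      intro t ht
      have ht0 : (0:ℝ) ≤ t := le_of_lt ht
      have h1 : iterConv φ (k+1) t = ∫ s in Set.Ioc (0:ℝ) t, iterConv φ k (t - s) * φ s := by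
        show (∫ s in (0:ℝ)..t, iterConv φ k (t - s) * φ s) = _
        rw [intervalIntegral.integral_of_le ht0]
      have h2 : ENNReal.ofReal (iterConv φ (k+1) t)
          = ∫⁻ s in Set.Ioc (0:ℝ) t, ENNReal.ofReal (iterConv φ k (t - s) * φ s) := by
        rw [h1]
        apply ofReal_integral_eq_lintegral_ofReal
          (iterConv_integrandOn hφ_meas hφ_nonneg hφ_bdd hφ_int k ht0)
        refine (ae_restrict_iff' measurableSet_Ioc).2 (ae_of_all _ fun s hs => ?_)
        exact mul_nonneg
          (iterConv_bounds hφ_meas hφ_nonneg hφ_bdd hφ_int k (t - s) (by linarith [hs.2])).1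
          (hφ_nonneg s hs.1.le)
      rw [h2, ← lintegral_indicator measurableSet_Ioc]
      refine lintegral_congr fun s => ?_
      by_cases hs : s ∈ Set.Ioc 0 t
      · rw [Set.indicator_of_mem hs, hHdef, Set.indicator_of_mem]
        exact ⟨hs.1, hs.2⟩
      · rw [Set.indicator_of_notMem hs, hHdef, Set.indicator_of_notMem]
        exact fun hc => hs ⟨hc.1, hc.2⟩
    set Lk := ∫⁻ t in Set.Ioi (0:ℝ), ENNReal.ofReal (iterConv φ k t) with hLk
    -- inner integral bound
    have hinner : ∀ s : ℝ, (∫⁻ t, H (t, s)) ≤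
        Set.indicator (Set.Ioi (0:ℝ)) (fun s => ENNReal.ofReal (φ s) * Lk) s := by
      intro s
      by_cases hs : s ∈ Set.Ioi (0:ℝ)
      · have hkey : (fun t => H (t, s)) = fun t =>
            (Set.Ici (0:ℝ)).indicator (fun u => ENNReal.ofReal (iterConv φ k u)) (t - s)
              * ENNReal.ofReal (φ s) := by
          funext t
          by_cases hts : s ≤ t
          · have hmem : (t, s) ∈ {p : ℝ × ℝ | 0 < p.2 ∧ p.2 ≤ p.1} := ⟨hs, hts⟩
            have hmem2 : t - s ∈ Set.Ici (0:ℝ) := sub_nonneg.2 hts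
            rw [hHdef, Set.indicator_of_mem hmem, Set.indicator_of_mem hmem2]
            exact ENNReal.ofReal_mul
              (iterConv_bounds hφ_meas hφ_nonneg hφ_bdd hφ_int k (t - s) (sub_nonneg.2 hts)).1
          · have hmem : (t, s) ∉ {p : ℝ × ℝ | 0 < p.2 ∧ p.2 ≤ p.1} := fun hc => hts hc.2
            have hmem2 : t - s ∉ Set.Ici (0:ℝ) := fun hc => hts (sub_nonneg.1 hc)
            rw [hHdef, Set.indicator_of_notMem hmem, Set.indicator_of_notMem hmem2, zero_mul]
        rw [hkey]
        have hFmeas : Measurable fun t : ℝ => (Set.Ici (0:ℝ)).indicator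
            (fun u => ENNReal.ofReal (iterConv φ k u)) (t - s) :=
          ((ENNReal.measurable_ofReal.comp (iterConv_measurable hφ_meas k)).indicator
            measurableSet_Ici).comp (measurable_id.sub measurable_const)
        rw [lintegral_mul_const _ hFmeas]
        have htrans : (∫⁻ t, (Set.Ici (0:ℝ)).indicator
            (fun u => ENNReal.ofReal (iterConv φ k u)) (t - s)) = Lk := by
          simp_rw [sub_eq_add_neg]
          rw [lintegral_add_right_eq_self
            ((Set.Ici (0:ℝ)).indicator (fun u => ENNReal.ofReal (iterConv φ k u))) (-s)]
          rw [lintegral_indicator measurableSet_Ici, hLk]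
          exact setLIntegral_congr Ioi_ae_eq_Ici.symm
        rw [htrans, Set.indicator_of_mem hs, mul_comm]
      · have : ∀ t, H (t, s) = 0 := by
          intro t
          rw [hHdef, Set.indicator_of_notMem]
          exact fun hc => hs hc.1
        simp only [this, lintegral_zero, Set.indicator_of_notMem hs]
        exact le_rfl
    calc (∫⁻ t in Set.Ioi (0:ℝ), ENNReal.ofReal (iterConv φ (k+1) t))
        = ∫⁻ t in Set.Ioi (0:ℝ), ∫⁻ s, H (t, s) :=
          setLIntegral_congr_fun measurableSet_Ioi hpt
      _ ≤ ∫⁻ t, ∫⁻ s, H (t, s) := setLIntegral_le_lintegral _ _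
      _ = ∫⁻ s, ∫⁻ t, H (t, s) := lintegral_lintegral_swap hHmeas.aemeasurable
      _ ≤ ∫⁻ s, Set.indicator (Set.Ioi (0:ℝ)) (fun s => ENNReal.ofReal (φ s) * Lk) s :=
          lintegral_mono hinner
      _ = ∫⁻ s in Set.Ioi (0:ℝ), ENNReal.ofReal (φ s) * Lk :=
          lintegral_indicator measurableSet_Ioi _
      _ = (∫⁻ s in Set.Ioi (0:ℝ), ENNReal.ofReal (φ s)) * Lk :=
          lintegral_mul_const _ (ENNReal.measurable_ofReal.comp hφ_meas)
      _ = ENNReal.ofReal B * Lk := by rw [hL0]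
      _ ≤ ENNReal.ofReal B * (ENNReal.ofReal B) ^ (k+1) := mul_le_mul_right ih _
      _ = (ENNReal.ofReal B) ^ (k+2) := by ring
end


/-- For `φ ∈ L¹ ∩ L²(0,∞)` nonnegative bounded, `λ > 0` with `λ‖φ‖₁ < 1`, and a
sequence `a_T ∈ (0,1)`, the functions `ψ_T = Σ_{k≥1} (a_T λ)^k φ^{*k}` lie in
`L²(0,∞)` with uniformly bounded `L²` norms, and `∫₀^∞ ψ_T(Ts)² ds → 0`
as `T → ∞`. -/
theorem psi_T_L2_bounds_and_scaling_limit
    (φ : ℝ → ℝ) (lam : ℝ) (a : ℕ → ℝ) (ψ : ℕ → ℝ → ℝ)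
    (hφ_meas : Measurable φ)
    (hφ_nonneg : ∀ t : ℝ, 0 ≤ t → 0 ≤ φ t)
    (hφ_bdd : ∃ C : ℝ, ∀ t : ℝ, 0 ≤ t → φ t ≤ C)
    (hφ_int : IntegrableOn φ (Set.Ioi 0))
    (hφ_L2 : IntegrableOn (fun t => (φ t) ^ 2) (Set.Ioi 0))
    (hlam_pos : 0 < lam)
    (hlam : lam * ∫ t in Set.Ioi (0 : ℝ), φ t < 1)
    (ha : ∀ T : ℕ, a T ∈ Set.Ioo (0 : ℝ) 1)
    (hψ : ∀ (T : ℕ) (t : ℝ), ψ T t = ∑' k : ℕ, (a T * lam) ^ (k + 1) * iterConv φ k t) :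
    (∀ T : ℕ, IntegrableOn (fun t => (ψ T t) ^ 2) (Set.Ioi 0)) ∧
    (∃ C : ℝ, ∀ T : ℕ, (∫ t in Set.Ioi (0 : ℝ), (ψ T t) ^ 2) ≤ C) ∧
    Tendsto (fun T : ℕ => ∫ s in Set.Ioi (0 : ℝ), (ψ T ((T : ℝ) * s)) ^ 2)
      atTop (nhds 0) := by
  obtain ⟨C, hφ_bdd⟩ := hφ_bdd
  set B := ∫ x in Set.Ioi (0:ℝ), φ x with hBdef
  have hC : 0 ≤ C := (hφ_nonneg 0 le_rfl).trans (hφ_bdd 0 le_rfl)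
  have hB : 0 ≤ B := setIntegral_nonneg measurableSet_Ioi (fun x hx => hφ_nonneg x hx.le)
  set r := lam * B with hrdef
  have hr0 : 0 ≤ r := mul_nonneg hlam_pos.le hB
  have hr1 : r < 1 := hlam
  have h1r : 0 < 1 - r := by linarith
  set M := lam * C / (1 - r) with hMdef
  have hM0 : 0 ≤ M := div_nonneg (mul_nonneg hlam_pos.le hC) h1r.le
  set K := M * (r / (1 - r)) with hKdef
  have hK0 : 0 ≤ K := mul_nonneg hM0 (div_nonneg hr0 h1r.le)
  have hbounds := iterConv_bounds hφ_meas hφ_nonneg hφ_bdd hφ_int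
  have hLk := iterConv_lintegral_le (C := C) hφ_meas hφ_nonneg hφ_bdd hφ_int
  have hgeom : Summable (fun k : ℕ => lam * C * r ^ k) :=
    (summable_geometric_of_lt_one hr0 hr1).mul_left _
  -- per T facts
  have key : ∀ T : ℕ, IntegrableOn (fun t => (ψ T t) ^ 2) (Set.Ioi 0) ∧
      (∫ t in Set.Ioi (0:ℝ), (ψ T t) ^ 2) ≤ K := by
    intro T
    obtain ⟨haT0, haT1⟩ := ha T
    have hal : 0 ≤ a T * lam := mul_nonneg haT0.le hlam_pos.le
    have hall : a T * lam ≤ lam := mul_le_of_le_one_left hlam_pos.le haT1.le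
    have hterm_nonneg : ∀ t : ℝ, 0 ≤ t → ∀ k : ℕ,
        0 ≤ (a T * lam) ^ (k + 1) * iterConv φ k t := fun t ht k =>
      mul_nonneg (pow_nonneg hal _) (hbounds k t ht).1
    have hterm_le : ∀ t : ℝ, 0 ≤ t → ∀ k : ℕ,
        (a T * lam) ^ (k + 1) * iterConv φ k t ≤ lam * C * r ^ k := by
      intro t ht k
      have h1 : (a T * lam) ^ (k + 1) ≤ lam ^ (k + 1) := pow_le_pow_left₀ hal hall _
      have h2 := (hbounds k t ht).2
      calc (a T * lam) ^ (k + 1) * iterConv φ k t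
          ≤ lam ^ (k + 1) * (C * B ^ k) := by
            apply mul_le_mul h1 h2 (hbounds k t ht).1 (pow_nonneg hlam_pos.le _)
        _ = lam * C * r ^ k := by rw [hrdef]; ring
    have hsumm : ∀ t : ℝ, 0 ≤ t →
        Summable (fun k : ℕ => (a T * lam) ^ (k + 1) * iterConv φ k t) := fun t ht =>
      Summable.of_nonneg_of_le (hterm_nonneg t ht) (hterm_le t ht) hgeom
    have hψ_nonneg : ∀ t : ℝ, 0 ≤ t → 0 ≤ ψ T t := by
      intro t ht; rw [hψ T t]; exact tsum_nonneg (hterm_nonneg t ht)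
    have hψ_le : ∀ t : ℝ, 0 ≤ t → ψ T t ≤ M := by
      intro t ht; rw [hψ T t]
      calc (∑' k : ℕ, (a T * lam) ^ (k + 1) * iterConv φ k t)
          ≤ ∑' k : ℕ, lam * C * r ^ k := Summable.tsum_le_tsum (hterm_le t ht) (hsumm t ht) hgeom
        _ = lam * C * (1 - r)⁻¹ := by
            rw [tsum_mul_left, tsum_geometric_of_lt_one hr0 hr1]
        _ = M := by rw [hMdef, div_eq_mul_inv]
    have hofReal : ∀ t : ℝ, 0 ≤ t → ENNReal.ofReal (ψ T t)
        = ∑' k : ℕ, ENNReal.ofReal ((a T * lam) ^ (k + 1) * iterConv φ k t) := by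
      intro t ht; rw [hψ T t]
      exact ENNReal.ofReal_tsum_of_nonneg (hterm_nonneg t ht) (hsumm t ht)
    have hEmeas : Measurable fun t : ℝ =>
        ∑' k : ℕ, ENNReal.ofReal ((a T * lam) ^ (k + 1) * iterConv φ k t) := by
      apply Measurable.ennreal_tsum
      intro k
      exact ENNReal.measurable_ofReal.comp
        ((iterConv_measurable hφ_meas k).const_mul _)
    have hae : ψ T =ᵐ[volume.restrict (Set.Ioi (0:ℝ))] fun t =>
        (∑' k : ℕ, ENNReal.ofReal ((a T * lam) ^ (k + 1) * iterConv φ k t)).toReal := by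
      refine (ae_restrict_iff' measurableSet_Ioi).2 (ae_of_all _ fun t ht => ?_)
      show ψ T t = (∑' k : ℕ, ENNReal.ofReal ((a T * lam) ^ (k + 1) * iterConv φ k t)).toReal
      rw [← hofReal t ht.le, ENNReal.toReal_ofReal (hψ_nonneg t ht.le)]
    have hψae : AEStronglyMeasurable (ψ T) (volume.restrict (Set.Ioi (0:ℝ))) :=
      (hEmeas.ennreal_toReal.aestronglyMeasurable).congr hae.symm
    -- lintegral of ψ
    have hIψ : (∫⁻ t in Set.Ioi (0:ℝ), ENNReal.ofReal (ψ T t))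
        ≤ ENNReal.ofReal (r / (1 - r)) := by
      have hstep1 : (∫⁻ t in Set.Ioi (0:ℝ), ENNReal.ofReal (ψ T t))
          = ∑' k : ℕ, ∫⁻ t in Set.Ioi (0:ℝ),
              ENNReal.ofReal ((a T * lam) ^ (k + 1) * iterConv φ k t) := by
        rw [setLIntegral_congr_fun measurableSet_Ioi
          (fun t ht => hofReal t (le_of_lt ht))]
        exact lintegral_tsum fun k => (ENNReal.measurable_ofReal.comp
          ((iterConv_measurable hφ_meas k).const_mul _)).aemeasurable
      have hstep2 : ∀ k : ℕ, (∫⁻ t in Set.Ioi (0:ℝ),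
          ENNReal.ofReal ((a T * lam) ^ (k + 1) * iterConv φ k t))
          ≤ (ENNReal.ofReal r) ^ (k + 1) := by
        intro k
        have heq : ∀ t : ℝ, ENNReal.ofReal ((a T * lam) ^ (k + 1) * iterConv φ k t)
            = ENNReal.ofReal ((a T * lam) ^ (k + 1)) * ENNReal.ofReal (iterConv φ k t) :=
          fun t => ENNReal.ofReal_mul (pow_nonneg hal _)
        simp_rw [heq]
        rw [lintegral_const_mul _ (iterConv_measurable hφ_meas k).ennreal_ofReal]
        calc ENNReal.ofReal ((a T * lam) ^ (k + 1))
              * ∫⁻ t in Set.Ioi (0:ℝ), ENNReal.ofReal (iterConv φ k t)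
            ≤ ENNReal.ofReal (lam ^ (k + 1)) * (ENNReal.ofReal B) ^ (k + 1) :=
              mul_le_mul' (ENNReal.ofReal_le_ofReal (pow_le_pow_left₀ hal hall _)) (hLk k)
          _ = (ENNReal.ofReal r) ^ (k + 1) := by
              rw [ENNReal.ofReal_pow hlam_pos.le, ← mul_pow,
                ← ENNReal.ofReal_mul hlam_pos.le]
      have hgeomE : (∑' k : ℕ, (ENNReal.ofReal r) ^ (k + 1))
          = ENNReal.ofReal (r / (1 - r)) := by
        rw [ENNReal.tsum_geometric_add_one, ENNReal.ofReal_div_of_pos h1r,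
          div_eq_mul_inv]
        congr 1
        rw [← ENNReal.ofReal_one, ← ENNReal.ofReal_sub _ hr0]
      rw [hstep1, ← hgeomE]
      exact ENNReal.tsum_le_tsum hstep2
    -- lintegral of ψ²
    have hsq : (∫⁻ t in Set.Ioi (0:ℝ), ENNReal.ofReal ((ψ T t) ^ 2))
        ≤ ENNReal.ofReal K := by
      have hptw : ∀ᵐ t ∂(volume.restrict (Set.Ioi (0:ℝ))),
          ENNReal.ofReal ((ψ T t) ^ 2) ≤ ENNReal.ofReal M * ENNReal.ofReal (ψ T t) := by
        refine (ae_restrict_iff' measurableSet_Ioi).2 (ae_of_all _ fun t ht => ?_)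
        rw [← ENNReal.ofReal_mul hM0]
        apply ENNReal.ofReal_le_ofReal
        rw [sq]
        exact mul_le_mul_of_nonneg_right (hψ_le t ht.le) (hψ_nonneg t ht.le)
      calc (∫⁻ t in Set.Ioi (0:ℝ), ENNReal.ofReal ((ψ T t) ^ 2))
          ≤ ∫⁻ t in Set.Ioi (0:ℝ), ENNReal.ofReal M * ENNReal.ofReal (ψ T t) :=
            lintegral_mono_ae hptw
        _ = ENNReal.ofReal M * ∫⁻ t in Set.Ioi (0:ℝ), ENNReal.ofReal (ψ T t) :=
            lintegral_const_mul' _ _ ENNReal.ofReal_ne_top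
        _ ≤ ENNReal.ofReal M * ENNReal.ofReal (r / (1 - r)) := mul_le_mul_right hIψ _
        _ = ENNReal.ofReal K := by rw [← ENNReal.ofReal_mul hM0, hKdef]
    have hsqae : AEStronglyMeasurable (fun t => (ψ T t) ^ 2)
        (volume.restrict (Set.Ioi (0:ℝ))) := by
      have : (fun t => (ψ T t) ^ 2) = (fun x : ℝ => x ^ 2) ∘ (ψ T) := rfl
      rw [this]
      exact (continuous_pow 2).comp_aestronglyMeasurable hψae
    have hint : IntegrableOn (fun t => (ψ T t) ^ 2) (Set.Ioi 0) := by
      refine ⟨hsqae, ?_⟩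
      rw [hasFiniteIntegral_iff_ofReal (ae_of_all _ fun t => sq_nonneg _)]
      exact lt_of_le_of_lt hsq ENNReal.ofReal_lt_top
    refine ⟨hint, ?_⟩
    rw [integral_eq_lintegral_of_nonneg_ae (ae_of_all _ fun t => sq_nonneg _) hsqae]
    exact ENNReal.toReal_le_of_le_ofReal hK0 hsq
  refine ⟨fun T => (key T).1, ⟨K, fun T => (key T).2⟩, ?_⟩
  -- scaling limit
  have hnn : ∀ T : ℕ, 0 ≤ ∫ s in Set.Ioi (0:ℝ), (ψ T ((T:ℝ) * s)) ^ 2 := fun T =>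
    setIntegral_nonneg measurableSet_Ioi fun s _ => sq_nonneg _
  apply tendsto_of_tendsto_of_tendsto_of_le_of_le' tendsto_const_nhds
    (tendsto_const_div_atTop_nhds_zero_nat K)
  · exact Eventually.of_forall hnn
  · filter_upwards [eventually_ge_atTop 1] with T hT
    have hT0 : (0:ℝ) < (T:ℝ) := by exact_mod_cast hT
    have hchg : (∫ s in Set.Ioi (0:ℝ), (ψ T ((T:ℝ) * s)) ^ 2)
        = (T:ℝ)⁻¹ * ∫ t in Set.Ioi (0:ℝ), (ψ T t) ^ 2 := by
      have := integral_comp_mul_left_Ioi (fun t => (ψ T t) ^ 2) 0 hT0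
      rw [mul_zero] at this
      rw [this, smul_eq_mul]
    rw [hchg, div_eq_inv_mul]
    apply mul_le_mul_of_nonneg_left (key T).2 (inv_nonneg.2 hT0.le)
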